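/- Let λ > 1 and r_λ = √(2(λ−1)). Let r : [0, ∞) → (0, ∞) be a solution of the ODE r'(t) = r(t)(r(t)² − 2(λ−1)) / (2(r(t)² + λ − 1)) with r(0) = r₀ > 0. If r₀ < r_λ, then r(t) is nonincreasing and there exists a constant c > 0, depending only on r₀ and λ, such that r(t) ≥ r₀ e^{−ct} for all t ≥ 0. If r₀ > r_λ, then r(t) is nondecreasing and r(t) ≤ r₀ e^{t/2} for all t ≥ 0. In particular, under the flow with normal velocity V_g = k_g/K_g, no vertical line r = r₀ < r_λ reaches the x-axis in finite time, and no vertical line r = r₀ > r_λ goes to infinity in finite time. -/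

import Mathlib

open Real


/-- Sign preservation for `v' = φ v` with `φ ≤ 1`. -/
lemma ode_sign_preserve (v φ : ℝ → ℝ)
    (hv : ∀ t ∈ Set.Ici (0:ℝ), HasDerivAt v (φ t * v t) t)
    (hφ : ∀ t ∈ Set.Ici (0:ℝ), φ t ≤ 1)
    (h0 : v 0 ≤ 0) : ∀ t ∈ Set.Ici (0:ℝ), v t ≤ 0 := by
  by_contra h
  push_neg at h
  obtain ⟨t₁, ht₁, hvt₁⟩ := h
  have ht₁0 : (0:ℝ) ≤ t₁ := ht₁
  have hcont : ContinuousOn v (Set.Icc 0 t₁) := fun t ht =>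
    ((hv t (Set.mem_Ici.mpr ht.1)).continuousAt).continuousWithinAt
  set S : Set ℝ := Set.Icc 0 t₁ ∩ v ⁻¹' Set.Iic 0 with hSdef
  have hSclosed : IsClosed S :=
    hcont.preimage_isClosed_of_isClosed isClosed_Icc isClosed_Iic
  have h0S : (0:ℝ) ∈ S := ⟨⟨le_refl 0, ht₁0⟩, h0⟩
  have hSne : S.Nonempty := ⟨0, h0S⟩
  have hSbdd : BddAbove S := ⟨t₁, fun x hx => hx.1.2⟩
  set t₀ : ℝ := sSup S with ht₀def
  have ht₀S : t₀ ∈ S := hSclosed.csSup_mem hSne hSbdd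
  have ht₀0 : (0:ℝ) ≤ t₀ := ht₀S.1.1
  have ht₀le : t₀ ≤ t₁ := ht₀S.1.2
  have hv₀ : v t₀ ≤ 0 := ht₀S.2
  have ht₀lt : t₀ < t₁ := lt_of_le_of_ne ht₀le (by
    intro hEq; rw [hEq] at hv₀; linarith)
  have hvpos : ∀ t ∈ Set.Ioo t₀ t₁, 0 < v t := by
    intro t ht
    by_contra hle
    push_neg at hle
    have : t ∈ S := ⟨⟨le_trans ht₀0 ht.1.le, ht.2.le⟩, hle⟩
    exact absurd (le_csSup hSbdd this) (not_le.mpr ht.1)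
  -- weighted function w
  set w : ℝ → ℝ := fun t => v t * Real.exp (-t) with hwdef
  have hw : ∀ t ∈ Set.Ici (0:ℝ), HasDerivAt w ((φ t - 1) * v t * Real.exp (-t)) t := by
    intro t ht
    have he : HasDerivAt (fun t : ℝ => Real.exp (-t)) (Real.exp (-t) * (-1)) t :=
      (Real.hasDerivAt_exp (-t)).comp t (hasDerivAt_neg t)
    have := (hv t ht).mul he
    refine this.congr_deriv ?_
    ring
  have hwanti : AntitoneOn w (Set.Icc t₀ t₁) := by
    apply antitoneOn_of_deriv_nonpos (convex_Icc t₀ t₁)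
    · intro t ht
      exact ((hw t (Set.mem_Ici.mpr (le_trans ht₀0 ht.1))).continuousAt).continuousWithinAt
    · intro t ht
      rw [interior_Icc] at ht
      exact ((hw t (Set.mem_Ici.mpr (le_trans ht₀0 ht.1.le))).differentiableAt).differentiableWithinAt
    · intro t ht
      rw [interior_Icc] at ht
      have htI : t ∈ Set.Ici (0:ℝ) := Set.mem_Ici.mpr (le_trans ht₀0 ht.1.le)
      rw [(hw t htI).deriv]
      have h1 : φ t - 1 ≤ 0 := by linarith [hφ t htI]
      have h2 : 0 < v t := hvpos t ht
      have h3 : 0 < Real.exp (-t) := Real.exp_pos _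
      exact mul_nonpos_of_nonpos_of_nonneg
        (mul_nonpos_of_nonpos_of_nonneg h1 h2.le) h3.le
  have := hwanti ⟨le_refl t₀, ht₀le⟩ ⟨ht₀le, le_refl t₁⟩ ht₀le
  have hwt₀ : w t₀ ≤ 0 := mul_nonpos_of_nonpos_of_nonneg hv₀ (Real.exp_pos _).le
  have hwt₁ : 0 < w t₁ := mul_pos hvt₁ (Real.exp_pos _)
  linarith

/-- Evolution of vertical lines `r = r₀` under the flow with normal velocity
`V_g = k_g/K_g`: lines with `r₀ < r_λ` move left but satisfy `r(t) ≥ r₀ e^{-ct}`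
(so they never reach the `x`-axis in finite time), and lines with `r₀ > r_λ`
move right but satisfy `r(t) ≤ r₀ e^{t/2}` (so they never reach infinity in
finite time), where `r_λ = √(2(λ-1))`. -/
theorem vertical_lines_evolution (lam : ℝ) (hlam : 1 < lam) (r₀ : ℝ) (hr₀ : 0 < r₀)
    (r : ℝ → ℝ) (hpos : ∀ t ∈ Set.Ici (0:ℝ), 0 < r t)
    (hode : ∀ t ∈ Set.Ici (0:ℝ),
      HasDerivAt r (r t * (r t ^ 2 - 2 * (lam - 1)) / (2 * (r t ^ 2 + lam - 1))) t)
    (hinit : r 0 = r₀) :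
    (r₀ < Real.sqrt (2 * (lam - 1)) →
      AntitoneOn r (Set.Ici 0) ∧
      ∃ c : ℝ, 0 < c ∧ ∀ t ∈ Set.Ici (0:ℝ), r₀ * exp (-(c * t)) ≤ r t) ∧
    (Real.sqrt (2 * (lam - 1)) < r₀ →
      MonotoneOn r (Set.Ici 0) ∧
      ∀ t ∈ Set.Ici (0:ℝ), r t ≤ r₀ * exp (t / 2)) := by
  have hb : 0 < lam - 1 := by linarith
  have hden : ∀ t ∈ Set.Ici (0:ℝ), 0 < 2 * (r t ^ 2 + lam - 1) := by
    intro t ht; nlinarith [hpos t ht, sq_nonneg (r t)]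
  set φ : ℝ → ℝ := fun t => r t ^ 2 / (r t ^ 2 + lam - 1) with hφdef
  have hφle : ∀ t ∈ Set.Ici (0:ℝ), φ t ≤ 1 := by
    intro t ht
    have h1 := hden t ht
    rw [hφdef]
    rw [div_le_one (by linarith)]
    linarith
  set u : ℝ → ℝ := fun t => r t ^ 2 - 2 * (lam - 1) with hudef
  have hu : ∀ t ∈ Set.Ici (0:ℝ), HasDerivAt u (φ t * u t) t := by
    intro t ht
    have h := ((hode t ht).pow 2).sub_const (2 * (lam - 1))
    refine h.congr_deriv ?_
    have hd2 : r t ^ 2 + lam - 1 ≠ 0 := by nlinarith [hden t ht]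
    rw [hφdef, hudef]
    field_simp
    ring
  constructor
  · -- case r₀ < r_λ
    intro hlt
    have hu0 : u 0 ≤ 0 := by
      have h2 : r₀ ^ 2 < 2 * (lam - 1) := (Real.lt_sqrt hr₀.le).mp hlt
      simp only [hudef, hinit]
      linarith
    have hule : ∀ t ∈ Set.Ici (0:ℝ), u t ≤ 0 := ode_sign_preserve u φ hu hφle hu0
    have hanti : AntitoneOn r (Set.Ici 0) := by
      apply antitoneOn_of_deriv_nonpos (convex_Ici 0)
      · intro t ht; exact (hode t ht).continuousAt.continuousWithinAt
      · intro t ht; rw [interior_Ici] at ht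
        exact (hode t (Set.mem_Ici.mpr (le_of_lt (Set.mem_Ioi.mp ht)))).differentiableAt.differentiableWithinAt
      · intro t ht; rw [interior_Ici] at ht
        have htI : t ∈ Set.Ici (0:ℝ) := Set.mem_Ici.mpr (le_of_lt (Set.mem_Ioi.mp ht))
        rw [(hode t htI).deriv]
        apply div_nonpos_of_nonpos_of_nonneg _ (hden t htI).le
        have h1 := hule t htI
        simp only [hudef] at h1
        exact mul_nonpos_of_nonneg_of_nonpos (hpos t htI).le h1
    refine ⟨hanti, 1, one_pos, ?_⟩
    intro t ht
    set g : ℝ → ℝ := fun s => r s * Real.exp s with hgdef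
    have hg : ∀ s ∈ Set.Ici (0:ℝ), HasDerivAt g
        ((r s * (r s ^ 2 - 2 * (lam - 1)) / (2 * (r s ^ 2 + lam - 1)) + r s) * Real.exp s) s := by
      intro s hs
      have h := (hode s hs).mul (Real.hasDerivAt_exp s)
      refine h.congr_deriv ?_
      ring
    have hmono : MonotoneOn g (Set.Ici 0) := by
      apply monotoneOn_of_deriv_nonneg (convex_Ici 0)
      · intro s hs; exact (hg s hs).continuousAt.continuousWithinAt
      · intro s hs; rw [interior_Ici] at hs
        exact (hg s (Set.mem_Ici.mpr (le_of_lt (Set.mem_Ioi.mp hs)))).differentiableAt.differentiableWithinAt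
      · intro s hs; rw [interior_Ici] at hs
        have hsI : s ∈ Set.Ici (0:ℝ) := Set.mem_Ici.mpr (le_of_lt (Set.mem_Ioi.mp hs))
        rw [(hg s hsI).deriv]
        have hdp := hden s hsI
        have hp := hpos s hsI
        have h1 : 0 ≤ r s * (r s ^ 2 - 2 * (lam - 1)) / (2 * (r s ^ 2 + lam - 1)) + r s := by
          rw [div_add' _ _ _ hdp.ne']
          apply div_nonneg _ hdp.le
          nlinarith
        exact mul_nonneg h1 (Real.exp_pos s).le
    have hkey := hmono (Set.mem_Ici.mpr (le_refl (0:ℝ))) ht ht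
    have hg0 : g 0 = r₀ := by simp [hgdef, hinit]
    rw [hg0] at hkey
    have hgt : g t = r t * Real.exp t := rfl
    rw [hgt] at hkey
    have hexp : (0:ℝ) < Real.exp t := Real.exp_pos t
    rw [one_mul, Real.exp_neg, ← div_eq_mul_inv, div_le_iff₀ hexp]
    linarith
  · -- case r₀ > r_λ
    intro hlt
    have hu0 : 0 ≤ u 0 := by
      have h2 : 2 * (lam - 1) < r₀ ^ 2 := (Real.sqrt_lt' hr₀).mp hlt
      simp only [hudef, hinit]
      linarith
    have hv : ∀ t ∈ Set.Ici (0:ℝ), HasDerivAt (fun s => -(u s)) (φ t * -(u t)) t := by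
      intro t ht
      have h := (hu t ht).neg
      refine h.congr_deriv ?_
      ring
    have huge : ∀ t ∈ Set.Ici (0:ℝ), 0 ≤ u t := by
      intro t ht
      have := ode_sign_preserve (fun s => -(u s)) φ hv hφle (by simpa using hu0) t ht
      simpa using this
    have hmono : MonotoneOn r (Set.Ici 0) := by
      apply monotoneOn_of_deriv_nonneg (convex_Ici 0)
      · intro t ht; exact (hode t ht).continuousAt.continuousWithinAt
      · intro t ht; rw [interior_Ici] at ht
        exact (hode t (Set.mem_Ici.mpr (le_of_lt (Set.mem_Ioi.mp ht)))).differentiableAt.differentiableWithinAt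
      · intro t ht; rw [interior_Ici] at ht
        have htI : t ∈ Set.Ici (0:ℝ) := Set.mem_Ici.mpr (le_of_lt (Set.mem_Ioi.mp ht))
        rw [(hode t htI).deriv]
        apply div_nonneg _ (hden t htI).le
        have h1 := huge t htI
        simp only [hudef] at h1
        exact mul_nonneg (hpos t htI).le h1
    refine ⟨hmono, ?_⟩
    intro t ht
    set h : ℝ → ℝ := fun s => r s * Real.exp (-(s / 2)) with hhdef
    have hh : ∀ s ∈ Set.Ici (0:ℝ), HasDerivAt h
        ((r s * (r s ^ 2 - 2 * (lam - 1)) / (2 * (r s ^ 2 + lam - 1)) - r s / 2)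
          * Real.exp (-(s / 2))) s := by
      intro s hs
      have he : HasDerivAt (fun s : ℝ => Real.exp (-(s / 2))) (Real.exp (-(s / 2)) * (-(1/2))) s :=
        (Real.hasDerivAt_exp (-(s / 2))).comp (h := fun x => -(x / 2)) s (((hasDerivAt_id s).div_const 2).neg)
      have hpr := (hode s hs).mul he
      refine hpr.congr_deriv ?_
      ring
    have hantih : AntitoneOn h (Set.Ici 0) := by
      apply antitoneOn_of_deriv_nonpos (convex_Ici 0)
      · intro s hs; exact (hh s hs).continuousAt.continuousWithinAt
      · intro s hs; rw [interior_Ici] at hs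
        exact (hh s (Set.mem_Ici.mpr (le_of_lt (Set.mem_Ioi.mp hs)))).differentiableAt.differentiableWithinAt
      · intro s hs; rw [interior_Ici] at hs
        have hsI : s ∈ Set.Ici (0:ℝ) := Set.mem_Ici.mpr (le_of_lt (Set.mem_Ioi.mp hs))
        rw [(hh s hsI).deriv]
        have hdp := hden s hsI
        have hp := hpos s hsI
        have h1 : r s * (r s ^ 2 - 2 * (lam - 1)) / (2 * (r s ^ 2 + lam - 1)) - r s / 2 ≤ 0 := by
          rw [sub_nonpos, div_le_div_iff₀ hdp two_pos]
          nlinarith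
        exact mul_nonpos_of_nonpos_of_nonneg h1 (Real.exp_pos _).le
    have hkey := hantih (Set.mem_Ici.mpr (le_refl (0:ℝ))) ht ht
    have hh0 : h 0 = r₀ := by simp [hhdef, hinit]
    rw [hh0] at hkey
    have hht : h t = r t * Real.exp (-(t / 2)) := rfl
    rw [hht] at hkey
    have hprod : Real.exp (-(t / 2)) * Real.exp (t / 2) = 1 := by
      rw [← Real.exp_add]; simp
    have h2 := mul_le_mul_of_nonneg_right hkey (Real.exp_pos (t / 2)).le
    calc r t = r t * (Real.exp (-(t / 2)) * Real.exp (t / 2)) := by rw [hprod, mul_one]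
      _ = r t * Real.exp (-(t / 2)) * Real.exp (t / 2) := by ring
      _ ≤ r₀ * Real.exp (t / 2) := h2
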